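/- arXiv:1502.07695 — 2 statements merged into one kernel-verified Lean document; each statement's English description precedes it below -/
import Mathlib

section
/- Let A be a real m×n matrix of rank n with m ≥ n, and let b ∈ ℝ^m. For each subset p of {1,…,m} with |p| = n, let A_p denote the n×n submatrix of A consisting of the rows of A indexed by p (in their original order) and let b_p denote the corresponding subvector of b. Then the weighted average of the sub-solutions, x̂ = (Σ_{p : det(A_p) ≠ 0} det(A_p)² · A_p⁻¹ b_p) / (Σ_{p, |p|=n} det(A_p)²), is well defined and equals the least-square solution (AᵀA)⁻¹ Aᵀ b. -/
open scoped Classical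
open Matrix

/-- `rowSub A p h` is the `n × n` submatrix of the `m × n` matrix `A` consisting of the
rows of `A` indexed by the subset `p ⊆ {1,…,m}` of size `n`, kept in their original order. -/
noncomputable def rowSub {m n : ℕ} (A : Matrix (Fin m) (Fin n) ℝ)
    (p : Finset (Fin m)) (h : p.card = n) : Matrix (Fin n) (Fin n) ℝ :=
  fun i j => A (p.orderEmbOfFin h i) j

/-- `vecSub b p h` is the subvector of `b ∈ ℝ^m` with indices in `p`, in their original order. -/
noncomputable def vecSub {m n : ℕ} (b : Fin m → ℝ)
    (p : Finset (Fin m)) (h : p.card = n) : Fin n → ℝ :=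
  fun i => b (p.orderEmbOfFin h i)

open Finset Equiv in
lemma cauchy_binet {m n : ℕ} (M : Matrix (Fin n) (Fin m) ℝ) (N : Matrix (Fin m) (Fin n) ℝ) :
    (M * N).det = ∑ p : {s : Finset (Fin m) // s.card = n},
      (M.submatrix id (p.1.orderEmbOfFin p.2)).det *
      (N.submatrix (p.1.orderEmbOfFin p.2) id).det := by
  have step1 : (M * N).det
      = ∑ r : Fin n → Fin m, (∏ i, M i (r i)) * (N.submatrix r id).det := by
    have h1 : (M * N).det = Matrix.detRowAlternating.toMultilinearMap
        (fun i => ∑ k, M i k • N k) := by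
      congr 1
      ext i j
      simp [Matrix.mul_apply]
    rw [h1, MultilinearMap.map_sum]
    refine Finset.sum_congr rfl fun r _ => ?_
    rw [MultilinearMap.map_smul_univ]
    rw [smul_eq_mul]
    congr 1
  have step2 : (M * N).det
      = ∑ r ∈ Finset.univ.filter (fun r : Fin n → Fin m => Function.Injective r),
          (∏ i, M i (r i)) * (N.submatrix r id).det := by
    rw [step1]
    refine (Finset.sum_filter_of_ne fun r _ hne => ?_).symm
    by_contra hr
    apply hne
    obtain ⟨i, j, hij, hne'⟩ : ∃ i j, r i = r j ∧ i ≠ j := by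
      rw [Function.Injective] at hr
      push_neg at hr
      exact hr
    rw [Matrix.det_zero_of_row_eq hne' (by ext k; simp [hij]), mul_zero]
  have step3 : (M * N).det
      = ∑ q : {s : Finset (Fin m) // s.card = n} × Equiv.Perm (Fin n),
          (∏ i, M i (q.1.1.orderEmbOfFin q.1.2 (q.2 i))) *
          (N.submatrix (fun i => q.1.1.orderEmbOfFin q.1.2 (q.2 i)) id).det := by
    rw [step2]
    refine (Finset.sum_bij
      (fun (q : {s : Finset (Fin m) // s.card = n} × Equiv.Perm (Fin n)) _ =>
        fun i => q.1.1.orderEmbOfFin q.1.2 (q.2 i)) ?_ ?_ ?_ ?_).symm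
    · intro q _
      simp only [Finset.mem_filter, Finset.mem_univ, true_and]
      exact (q.1.1.orderEmbOfFin q.1.2).injective.comp q.2.injective
    · rintro ⟨⟨ps, hp⟩, σ⟩ _ ⟨⟨qs, hq⟩, τ⟩ _ hfun
      simp only at hfun
      have hL : Set.range (fun i => ps.orderEmbOfFin hp (σ i)) = (ps : Set (Fin m)) := by
        rw [show (fun i => ps.orderEmbOfFin hp (σ i)) = (ps.orderEmbOfFin hp) ∘ σ from rfl,
          Function.Surjective.range_comp σ.surjective, Finset.range_orderEmbOfFin]
      have hR : Set.range (fun i => qs.orderEmbOfFin hq (τ i)) = (qs : Set (Fin m)) := by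
        rw [show (fun i => qs.orderEmbOfFin hq (τ i)) = (qs.orderEmbOfFin hq) ∘ τ from rfl,
          Function.Surjective.range_comp τ.surjective, Finset.range_orderEmbOfFin]
      have himg : ps = qs := Finset.coe_injective (by
        rw [← hL, ← hR]; exact congrArg Set.range hfun)
      subst himg
      have hστ : σ = τ :=
        Equiv.ext fun i => (ps.orderEmbOfFin hp).injective (congrFun hfun i)
      subst hστ
      rfl
    · intro r hr
      simp only [Finset.mem_filter, Finset.mem_univ, true_and] at hr
      set p : Finset (Fin m) := Finset.univ.image r with hpdef
      have hp : p.card = n := by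
        rw [hpdef, Finset.card_image_of_injective _ hr, Finset.card_univ, Fintype.card_fin]
      have hmem : ∀ i, r i ∈ p := fun i => Finset.mem_image.2 ⟨i, Finset.mem_univ i, rfl⟩
      set g : Fin n → Fin n := fun i => (p.orderIsoOfFin hp).symm ⟨r i, hmem i⟩ with hgdef
      have hg : Function.Injective g := by
        intro i j hij
        apply hr
        have h2 : (⟨r i, hmem i⟩ : {x // x ∈ p}) = ⟨r j, hmem j⟩ := by
          have := congrArg (p.orderIsoOfFin hp) hij
          simpa [hgdef, OrderIso.apply_symm_apply] using this
        exact congrArg Subtype.val h2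
      refine ⟨⟨⟨p, hp⟩, Equiv.ofBijective g ((Finite.injective_iff_bijective).1 hg)⟩,
        Finset.mem_univ _, ?_⟩
      funext i
      show p.orderEmbOfFin hp (g i) = r i
      rw [hgdef]
      have := p.coe_orderIsoOfFin_apply hp ((p.orderIsoOfFin hp).symm ⟨r i, hmem i⟩)
      rw [← this, OrderIso.apply_symm_apply]
    · intro q _
      rfl
  rw [step3, Fintype.sum_prod_type]
  refine Finset.sum_congr rfl fun p _ => ?_
  have key : ∀ σ : Equiv.Perm (Fin n),
      (N.submatrix (fun i => p.1.orderEmbOfFin p.2 (σ i)) id).det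
      = (Equiv.Perm.sign σ : ℝ) * (N.submatrix (p.1.orderEmbOfFin p.2) id).det := by
    intro σ
    exact Matrix.det_permute σ (N.submatrix (p.1.orderEmbOfFin p.2) id)
  calc ∑ σ : Equiv.Perm (Fin n), (∏ i, M i (p.1.orderEmbOfFin p.2 (σ i))) *
        (N.submatrix (fun i => p.1.orderEmbOfFin p.2 (σ i)) id).det
      = (∑ σ : Equiv.Perm (Fin n), (Equiv.Perm.sign σ : ℝ) *
          ∏ i, M i (p.1.orderEmbOfFin p.2 (σ i))) *
        (N.submatrix (p.1.orderEmbOfFin p.2) id).det := by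
        rw [Finset.sum_mul]
        refine Finset.sum_congr rfl fun σ _ => ?_
        rw [key σ]; ring
    _ = (M.submatrix id (p.1.orderEmbOfFin p.2)).det *
        (N.submatrix (p.1.orderEmbOfFin p.2) id).det := by
        congr 1
        rw [← Matrix.det_transpose (M.submatrix id (p.1.orderEmbOfFin p.2)),
          Matrix.det_apply']
        refine Finset.sum_congr rfl fun σ _ => ?_
        congr 1

theorem weighted_average_eq_least_squares {m n : ℕ} (hmn : n ≤ m)
    (A : Matrix (Fin m) (Fin n) ℝ) (hA : A.rank = n) (b : Fin m → ℝ) :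
    (∑ p : {s : Finset (Fin m) // s.card = n}, (rowSub A p.1 p.2).det ^ 2) ≠ 0 ∧
    (∑ p : {s : Finset (Fin m) // s.card = n}, (rowSub A p.1 p.2).det ^ 2)⁻¹ •
      (∑ p : {s : Finset (Fin m) // s.card = n},
        if (rowSub A p.1 p.2).det ≠ 0 then
          ((rowSub A p.1 p.2).det ^ 2) • ((rowSub A p.1 p.2)⁻¹ *ᵥ vecSub b p.1 p.2)
        else 0) =
    ((A.transpose * A)⁻¹ * A.transpose) *ᵥ b := by
  have hdetT : ∀ p : {s : Finset (Fin m) // s.card = n},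
      (Aᵀ.submatrix id (p.1.orderEmbOfFin p.2)).det = (rowSub A p.1 p.2).det := by
    intro p
    rw [show Aᵀ.submatrix id (p.1.orderEmbOfFin p.2)
        = (A.submatrix (p.1.orderEmbOfFin p.2) id)ᵀ from rfl, Matrix.det_transpose]
    rfl
  have hD : (Aᵀ * A).det
      = ∑ p : {s : Finset (Fin m) // s.card = n}, (rowSub A p.1 p.2).det ^ 2 := by
    rw [cauchy_binet]
    refine Finset.sum_congr rfl fun p _ => ?_
    rw [hdetT p, sq]
    congr 1
  have hDne : (Aᵀ * A).det ≠ 0 := by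
    have hrank : (Aᵀ * A).rank = n := by rw [Matrix.rank_transpose_mul_self, hA]
    have htop : LinearMap.range (Aᵀ * A).mulVecLin = ⊤ := by
      apply Submodule.eq_top_of_finrank_eq
      rw [show Module.finrank ℝ (LinearMap.range (Aᵀ * A).mulVecLin) = (Aᵀ * A).rank from rfl,
        hrank]
      simp [Module.finrank_pi]
    have hsurj : Function.Surjective (Aᵀ * A).mulVec := by
      intro v
      obtain ⟨w, hw⟩ := (LinearMap.range_eq_top.1 htop) v
      exact ⟨w, hw⟩
    exact ((Matrix.isUnit_iff_isUnit_det _).1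
      (Matrix.mulVec_surjective_iff_isUnit.1 hsurj)).ne_zero
  have hterm : ∀ p : {s : Finset (Fin m) // s.card = n},
      (if (rowSub A p.1 p.2).det ≠ 0 then
          ((rowSub A p.1 p.2).det ^ 2) • ((rowSub A p.1 p.2)⁻¹ *ᵥ vecSub b p.1 p.2)
        else 0)
      = (rowSub A p.1 p.2).det • ((rowSub A p.1 p.2).adjugate *ᵥ vecSub b p.1 p.2) := by
    intro p
    by_cases hd : (rowSub A p.1 p.2).det = 0
    · simp [hd]
    · rw [if_pos hd, Matrix.inv_def, Ring.inverse_eq_inv, Matrix.smul_mulVec,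
        smul_smul]
      congr 1
      field_simp
  have hnum : (∑ p : {s : Finset (Fin m) // s.card = n},
      (rowSub A p.1 p.2).det • ((rowSub A p.1 p.2).adjugate *ᵥ vecSub b p.1 p.2))
      = (Aᵀ * A).adjugate *ᵥ (Aᵀ *ᵥ b) := by
    rw [← Matrix.cramer_eq_adjugate_mulVec]
    funext j
    rw [Finset.sum_apply, Matrix.cramer_apply]
    have hMat : (Aᵀ * A).updateCol j (Aᵀ *ᵥ b) = Aᵀ * (A.updateCol j b) := by
      ext i k
      by_cases hk : k = j
      · subst hk
        simp [Matrix.mul_apply, Matrix.updateCol_apply, Matrix.mulVec, dotProduct,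
          Matrix.transpose_apply]
      · simp [Matrix.mul_apply, Matrix.updateCol_apply, hk]
    rw [hMat, cauchy_binet]
    refine Finset.sum_congr rfl fun p _ => ?_
    rw [Pi.smul_apply, smul_eq_mul, hdetT p]
    congr 1
    have hsub : (A.updateCol j b).submatrix (p.1.orderEmbOfFin p.2) id
        = (rowSub A p.1 p.2).updateCol j (vecSub b p.1 p.2) := by
      ext i k
      by_cases hk : k = j
      · subst hk
        simp [rowSub, vecSub, Matrix.updateCol_apply, Matrix.submatrix_apply]
      · simp [rowSub, vecSub, Matrix.updateCol_apply, hk, Matrix.submatrix_apply]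
    rw [hsub]
    rw [show ((rowSub A p.1 p.2).adjugate *ᵥ vecSub b p.1 p.2) j
        = Matrix.cramer (rowSub A p.1 p.2) (vecSub b p.1 p.2) j by
      rw [Matrix.cramer_eq_adjugate_mulVec], Matrix.cramer_apply]
  constructor
  · rw [← hD]; exact hDne
  · simp only [hterm]
    rw [hnum, ← hD, ← Matrix.mulVec_mulVec, Matrix.inv_def, Ring.inverse_eq_inv,
      Matrix.smul_mulVec]
end

section
/- Let m ≥ n and consider the map g : M_{m×n}(ℝ) → ℝ, g(A) = Σ_{p ⊆ {1,…,m}, |p| = n} det(A_p)². Fix i ∈ {1,…,m} and j ∈ {1,…,n}. Then for every m×n real matrix A, the partial derivative of g with respect to the entry A_{ij} equals 2 · (Σ_{p} det(A_p) · embb(adj(A_p), p, m))_{ji}, i.e. 2 times the (j,i) entry of the n×m matrix Σ_p det(A_p) · embb(adj(A_p), p, m). -/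
open scoped Classical
open Matrix

/-- `embb B p h` is the `n × m` matrix whose `pᵢ`-th column is the `i`-th column of the
`n × n` matrix `B` (where `p₁ < … < p_n` are the elements of `p`), and whose other
columns are zero. -/
noncomputable def embb {m n : ℕ} (B : Matrix (Fin n) (Fin n) ℝ)
    (p : Finset (Fin m)) (h : p.card = n) : Matrix (Fin n) (Fin m) ℝ :=
  fun i k => if hk : k ∈ p then B i ((p.orderIsoOfFin h).symm ⟨k, hk⟩) else 0

lemma rowSub_det_eq {m n : ℕ} (A : Matrix (Fin m) (Fin n) ℝ) (i : Fin m) (j : Fin n)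
    (p : Finset (Fin m)) (hp : p.card = n) (t : ℝ) :
    (rowSub (A + t • Matrix.single i j 1) p hp).det =
      (rowSub A p hp).det + t * embb ((rowSub A p hp).adjugate) p hp j i := by
  by_cases hi : i ∈ p
  · set k : Fin n := (p.orderIsoOfFin hp).symm ⟨i, hi⟩ with hk
    have hemb : p.orderEmbOfFin hp k = i := by
      have := Finset.coe_orderIsoOfFin_apply p hp k
      rw [hk, OrderIso.apply_symm_apply] at this
      exact this.symm
    have hinj : Function.Injective (p.orderEmbOfFin hp) := (p.orderEmbOfFin hp).injective
    have hM : rowSub (A + t • Matrix.single i j 1) p hp =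
        (rowSub A p hp).updateRow k (rowSub A p hp k + t • (Pi.single j 1 : Fin n → ℝ)) := by
      ext r c
      rw [Matrix.updateRow_apply]
      by_cases hr : r = k
      · subst hr
        simp [rowSub, hemb, Matrix.single, Pi.single_apply, eq_comm, mul_comm]
      · have : p.orderEmbOfFin hp r ≠ i := fun h => hr (hinj (h.trans hemb.symm))
        simp [rowSub, hr, Matrix.single, this, Ne.symm this]
    rw [hM, Matrix.det_updateRow_add, Matrix.updateRow_eq_self, Matrix.det_updateRow_smul,
      embb, dif_pos hi, ← hk, Matrix.adjugate_apply]
  · have hM : rowSub (A + t • Matrix.single i j 1) p hp = rowSub A p hp := by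
      ext r c
      have : p.orderEmbOfFin hp r ≠ i := fun h => hi (h ▸ p.orderEmbOfFin_mem hp r)
      simp [rowSub, Matrix.single, this, Ne.symm this]
    rw [hM, embb, dif_neg hi]
    ring

/-- The partial derivative of `g(A) = Σ_p det(A_p)²` with respect to the entry `A i j`
(i.e. the derivative at `t = 0` of `t ↦ g (A + t • E i j)`) equals `2` times the `(j,i)`
entry of `Σ_p det(A_p) • embb (adj (A_p), p, m)`. -/
theorem partialDeriv_sum_sq_det {m n : ℕ} (hmn : n ≤ m)
    (A : Matrix (Fin m) (Fin n) ℝ) (i : Fin m) (j : Fin n) :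
    HasDerivAt
      (fun t : ℝ =>
        ∑ p : {s : Finset (Fin m) // s.card = n},
          (rowSub (A + t • Matrix.single i j 1) p.1 p.2).det ^ 2)
      (2 * (∑ p : {s : Finset (Fin m) // s.card = n},
          (rowSub A p.1 p.2).det • embb ((rowSub A p.1 p.2).adjugate) p.1 p.2) j i) 0 := by
  have key : ∀ p : {s : Finset (Fin m) // s.card = n},
      HasDerivAt (fun t : ℝ => (rowSub (A + t • Matrix.single i j 1) p.1 p.2).det ^ 2)
        (2 * ((rowSub A p.1 p.2).det * embb ((rowSub A p.1 p.2).adjugate) p.1 p.2 j i)) 0 := by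
    intro p
    set d := (rowSub A p.1 p.2).det
    set c := embb ((rowSub A p.1 p.2).adjugate) p.1 p.2 j i
    have h1 : HasDerivAt (fun t : ℝ => d + t * c) c 0 := by
      simpa using (hasDerivAt_mul_const c).const_add d
    have h2 := h1.fun_pow 2
    simp only [rowSub_det_eq A i j p.1 p.2]
    refine h2.congr_deriv ?_
    push_cast
    ring
  have hsum : HasDerivAt
      (fun t : ℝ => ∑ p : {s : Finset (Fin m) // s.card = n},
        (rowSub (A + t • Matrix.single i j 1) p.1 p.2).det ^ 2)
      (∑ p : {s : Finset (Fin m) // s.card = n},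
        2 * ((rowSub A p.1 p.2).det * embb ((rowSub A p.1 p.2).adjugate) p.1 p.2 j i)) 0 :=
    HasDerivAt.fun_sum (fun p _ => key p)
  convert hsum using 1
  rw [Matrix.sum_apply, Finset.mul_sum]
  simp [Matrix.smul_apply, smul_eq_mul]
end
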